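/- Let G be a graph of order n with at least one edge and let G̃ be obtained from G by removing one edge. If 0 ≤ α ≤ 2/3, then λ_j(B_α(G)) ≥ λ_j(B_α(G̃)) for all j = 1,…,n, where eigenvalues are arranged in non-increasing order. -/

import Mathlib

open Matrix

/-- The adjacency matrix of `G` over `ℝ`. -/
noncomputable def adjM {V : Type*} [Fintype V] [DecidableEq V]
    (G : SimpleGraph V) [DecidableRel G.Adj] : Matrix V V ℝ :=
  G.adjMatrix ℝ

/-- The diagonal degree matrix of `G`. -/
noncomputable def degM {V : Type*} [Fintype V] [DecidableEq V]
    (G : SimpleGraph V) [DecidableRel G.Adj] : Matrix V V ℝ :=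
  Matrix.diagonal fun v => (G.degree v : ℝ)

/-- The Laplacian matrix `L(G) = D(G) - A(G)`. -/
noncomputable def lapM {V : Type*} [Fintype V] [DecidableEq V]
    (G : SimpleGraph V) [DecidableRel G.Adj] : Matrix V V ℝ :=
  degM G - adjM G

/-- The matrix `B_α(G) = α A(G) + (1-α) L(G)`. -/
noncomputable def Balpha {V : Type*} [Fintype V] [DecidableEq V]
    (G : SimpleGraph V) [DecidableRel G.Adj] (α : ℝ) : Matrix V V ℝ :=
  α • adjM G + (1 - α) • lapM G

/-- The `j`-th largest eigenvalue (eigenvalues arranged in non-increasing order)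
of a Hermitian real matrix. -/
noncomputable def eigDesc {n : ℕ} {M : Matrix (Fin n) (Fin n) ℝ}
    (hM : M.IsHermitian) (j : Fin n) : ℝ :=
  (hM.eigenvalues ∘ Tuple.sort hM.eigenvalues) j.rev

section Aux

open Finset

variable {n : ℕ}

local notation "⟪" x ", " y "⟫" => @inner ℝ _ _ x y

private lemma repr_zero_of_mem_span (b : OrthonormalBasis (Fin n) ℝ (EuclideanSpace ℝ (Fin n)))
    (t : Finset (Fin n)) {x : EuclideanSpace ℝ (Fin n)}
    (hx : x ∈ Submodule.span ℝ (⇑b '' ↑t)) {i : Fin n} (hi : i ∉ t) :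
    b.repr x i = 0 := by
  have : Submodule.span ℝ (⇑b '' ↑t) ≤ LinearMap.ker ((innerSL ℝ (b i)).toLinearMap) := by
    rw [Submodule.span_le]
    rintro _ ⟨k, hk, rfl⟩
    simp only [SetLike.mem_coe, LinearMap.mem_ker, ContinuousLinearMap.coe_coe, innerSL_apply_apply]
    have hki : i ≠ k := fun h => hi (h ▸ hk)
    simpa using b.orthonormal.2 hki
  have h0 := this hx
  simp only [LinearMap.mem_ker, ContinuousLinearMap.coe_coe, innerSL_apply_apply] at h0
  rw [b.repr_apply_apply, h0]

private lemma qf_formula {A : Matrix (Fin n) (Fin n) ℝ} (hA : A.IsHermitian)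
    (x : EuclideanSpace ℝ (Fin n)) :
    ⟪x, Matrix.toEuclideanLin A x⟫ =
      ∑ i, hA.eigenvalues i * (hA.eigenvectorBasis.repr x i)^2 := by
  set b := hA.eigenvectorBasis
  rw [← b.sum_inner_mul_inner x (Matrix.toEuclideanLin A x)]
  refine Finset.sum_congr rfl fun i _ => ?_
  have hsym : (Matrix.toEuclideanLin A).IsSymmetric :=
    Matrix.isHermitian_iff_isSymmetric.mp hA
  have heig : Matrix.toEuclideanLin A (b i) = hA.eigenvalues i • (b i) := by
    apply (WithLp.equiv 2 (Fin n → ℝ)).injective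
    simpa using hA.mulVec_eigenvectorBasis i
  have : ⟪b i, Matrix.toEuclideanLin A x⟫ = hA.eigenvalues i * ⟪b i, x⟫ := by
    rw [← hsym (b i) x, heig, inner_smul_left]
    simp
  rw [this, b.repr_apply_apply, real_inner_comm x (b i)]
  ring

private lemma normsq_formula (b : OrthonormalBasis (Fin n) ℝ (EuclideanSpace ℝ (Fin n)))
    (x : EuclideanSpace ℝ (Fin n)) :
    ⟪x, x⟫ = ∑ i, (b.repr x i)^2 := by
  rw [← b.sum_inner_mul_inner x x]
  refine Finset.sum_congr rfl fun i _ => ?_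
  rw [b.repr_apply_apply, real_inner_comm x (b i)]
  ring

private lemma span_dim (b : OrthonormalBasis (Fin n) ℝ (EuclideanSpace ℝ (Fin n)))
    (t : Finset (Fin n)) :
    Module.finrank ℝ (Submodule.span ℝ (⇑b '' ↑t)) = t.card := by
  rw [Set.image_eq_range]
  have h2 := finrank_span_eq_card
    (b.orthonormal.linearIndependent.comp
      ((↑) : {x // x ∈ (↑t : Set (Fin n))} → Fin n) Subtype.val_injective)
  simpa [Function.comp_def] using h2

private lemma eigDesc_mono {M N : Matrix (Fin n) (Fin n) ℝ}
    (hM : M.IsHermitian) (hN : N.IsHermitian)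
    (h : ∀ x : EuclideanSpace ℝ (Fin n),
      ⟪x, Matrix.toEuclideanLin N x⟫ ≤ ⟪x, Matrix.toEuclideanLin M x⟫)
    (j : Fin n) : eigDesc hN j ≤ eigDesc hM j := by
  set bM := hM.eigenvectorBasis with hbM
  set bN := hN.eigenvectorBasis with hbN
  set σM := Tuple.sort hM.eigenvalues with hσM
  set σN := Tuple.sort hN.eigenvalues with hσN
  set tN : Finset (Fin n) := (Finset.Ici j.rev).image σN with htN
  set tM : Finset (Fin n) := (Finset.Iic j.rev).image σM with htM
  set U := Submodule.span ℝ (⇑bN '' ↑tN) with hU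
  set W := Submodule.span ℝ (⇑bM '' ↑tM) with hW
  have hUdim : Module.finrank ℝ U = n - (j.rev : ℕ) := by
    rw [span_dim, Finset.card_image_of_injective _ σN.injective, Fin.card_Ici]
  have hWdim : Module.finrank ℝ W = (j.rev : ℕ) + 1 := by
    rw [span_dim, Finset.card_image_of_injective _ σM.injective, Fin.card_Iic]
  have hinf : 0 < Module.finrank ℝ (U ⊓ W : Submodule ℝ (EuclideanSpace ℝ (Fin n))) := by
    have hsum := Submodule.finrank_sup_add_finrank_inf_eq U W
    have hle : Module.finrank ℝ (U ⊔ W : Submodule ℝ (EuclideanSpace ℝ (Fin n))) ≤ n := by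
      have := Submodule.finrank_le (U ⊔ W)
      simpa [finrank_euclideanSpace] using this
    have hj : (j.rev : ℕ) < n := j.rev.isLt
    omega
  have hne : (U ⊓ W : Submodule ℝ (EuclideanSpace ℝ (Fin n))) ≠ ⊥ := by
    intro hbot
    rw [hbot, finrank_bot] at hinf
    exact lt_irrefl 0 hinf
  obtain ⟨x, hxmem, hx0⟩ := Submodule.exists_mem_ne_zero_of_ne_bot hne
  have hxU : x ∈ U := hxmem.1
  have hxW : x ∈ W := hxmem.2
  have hN1 : eigDesc hN j * ⟪x, x⟫ ≤ ⟪x, Matrix.toEuclideanLin N x⟫ := by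
    rw [qf_formula hN, normsq_formula bN, Finset.mul_sum]
    refine Finset.sum_le_sum fun i _ => ?_
    by_cases hi : i ∈ tN
    · obtain ⟨i', hi', rfl⟩ := Finset.mem_image.mp hi
      have : eigDesc hN j ≤ hN.eigenvalues (σN i') :=
        Tuple.monotone_sort hN.eigenvalues (Finset.mem_Ici.mp hi')
      exact mul_le_mul_of_nonneg_right this (sq_nonneg _)
    · rw [repr_zero_of_mem_span bN tN hxU hi]
      simp
  have hM1 : ⟪x, Matrix.toEuclideanLin M x⟫ ≤ eigDesc hM j * ⟪x, x⟫ := by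
    rw [qf_formula hM, normsq_formula bM, Finset.mul_sum]
    refine Finset.sum_le_sum fun i _ => ?_
    by_cases hi : i ∈ tM
    · obtain ⟨i', hi', rfl⟩ := Finset.mem_image.mp hi
      have : hM.eigenvalues (σM i') ≤ eigDesc hM j :=
        Tuple.monotone_sort hM.eigenvalues (Finset.mem_Iic.mp hi')
      exact mul_le_mul_of_nonneg_right this (sq_nonneg _)
    · rw [repr_zero_of_mem_span bM tM hxW hi]
      simp
  have hpos : (0:ℝ) < ⟪x, x⟫ := by
    rw [real_inner_self_eq_norm_sq]
    exact pow_pos (norm_pos_iff.mpr hx0) 2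
  have := le_trans hN1 (le_trans (h x) hM1)
  exact le_of_mul_le_mul_right this hpos

private lemma neighborFinset_del (G : SimpleGraph (Fin n)) [DecidableRel G.Adj] {u v : Fin n}
    (huv : G.Adj u v) [DecidableRel (G.deleteEdges {s(u,v)}).Adj] :
    (G.deleteEdges {s(u,v)}).neighborFinset u = (G.neighborFinset u).erase v := by
  have hne : u ≠ v := G.ne_of_adj huv
  ext k
  simp only [SimpleGraph.mem_neighborFinset, SimpleGraph.deleteEdges_adj, Set.mem_singleton_iff,
    Sym2.eq_iff, Finset.mem_erase]
  tauto

private lemma neighborFinset_del₂ (G : SimpleGraph (Fin n)) [DecidableRel G.Adj] {u v : Fin n}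
    (huv : G.Adj u v) [DecidableRel (G.deleteEdges {s(u,v)}).Adj] :
    (G.deleteEdges {s(u,v)}).neighborFinset v = (G.neighborFinset v).erase u := by
  have hne : u ≠ v := G.ne_of_adj huv
  ext k
  simp only [SimpleGraph.mem_neighborFinset, SimpleGraph.deleteEdges_adj, Set.mem_singleton_iff,
    Sym2.eq_iff, Finset.mem_erase]
  tauto

private lemma deg_del (G : SimpleGraph (Fin n)) [DecidableRel G.Adj] {u v : Fin n}
    (huv : G.Adj u v) [DecidableRel (G.deleteEdges {s(u,v)}).Adj] (i : Fin n) :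
    ((G.deleteEdges {s(u,v)}).degree i : ℝ) =
      (G.degree i : ℝ) - (if i = u ∨ i = v then 1 else 0) := by
  have hne : u ≠ v := G.ne_of_adj huv
  by_cases hiu : i = u
  · subst hiu
    have h2 : 0 < G.degree i := by
      rw [SimpleGraph.degree_pos_iff_exists_adj]; exact ⟨v, huv⟩
    have h1 : (G.deleteEdges {s(i,v)}).degree i = G.degree i - 1 := by
      rw [SimpleGraph.degree, neighborFinset_del G huv,
        Finset.card_erase_of_mem (by simpa [SimpleGraph.mem_neighborFinset] using huv)]
      rfl
    rw [h1, Nat.cast_sub h2]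
    simp
  · by_cases hiv : i = v
    · subst hiv
      have h2 : 0 < G.degree i := by
        rw [SimpleGraph.degree_pos_iff_exists_adj]; exact ⟨u, huv.symm⟩
      have h1 : (G.deleteEdges {s(u,i)}).degree i = G.degree i - 1 := by
        rw [SimpleGraph.degree, neighborFinset_del₂ G huv,
          Finset.card_erase_of_mem
            (by simpa [SimpleGraph.mem_neighborFinset] using huv.symm)]
        rfl
      rw [h1, Nat.cast_sub h2]
      simp [hiu, hne]
    · have h1 : (G.deleteEdges {s(u,v)}).neighborFinset i = G.neighborFinset i := by
        ext k
        simp only [SimpleGraph.mem_neighborFinset, SimpleGraph.deleteEdges_adj,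
          Set.mem_singleton_iff, Sym2.eq_iff]
        constructor
        · tauto
        · intro h
          refine ⟨h, ?_⟩
          rintro (⟨rfl, rfl⟩ | ⟨rfl, rfl⟩) <;> simp_all
      rw [SimpleGraph.degree, h1, SimpleGraph.degree]
      simp [hiu, hiv]

private lemma adj_del_ite (G : SimpleGraph (Fin n)) [DecidableRel G.Adj] {u v : Fin n}
    (huv : G.Adj u v) [DecidableRel (G.deleteEdges {s(u,v)}).Adj] (i k : Fin n) :
    (if (G.deleteEdges {s(u,v)}).Adj i k then (1:ℝ) else 0) =
      (if G.Adj i k then 1 else 0) -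
        (if (i = u ∧ k = v) ∨ (i = v ∧ k = u) then 1 else 0) := by
  by_cases h : (i = u ∧ k = v) ∨ (i = v ∧ k = u)
  · have hadj : G.Adj i k := by
      rcases h with ⟨rfl, rfl⟩ | ⟨rfl, rfl⟩
      · exact huv
      · exact huv.symm
    have h2 : ¬ (G.deleteEdges {s(u,v)}).Adj i k := by
      simp only [SimpleGraph.deleteEdges_adj, Set.mem_singleton_iff, Sym2.eq_iff]
      tauto
    simp [h, h2, hadj]
  · have h2 : (G.deleteEdges {s(u,v)}).Adj i k ↔ G.Adj i k := by
      simp only [SimpleGraph.deleteEdges_adj, Set.mem_singleton_iff, Sym2.eq_iff]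
      tauto
    simp [h, h2]

private lemma Bentry (G : SimpleGraph (Fin n)) [DecidableRel G.Adj] (α : ℝ) (i k : Fin n) :
    Balpha G α i k = (2*α-1) * (if G.Adj i k then 1 else 0)
      + (1-α) * (if i = k then (G.degree i : ℝ) else 0) := by
  simp only [Balpha, adjM, degM, lapM, Matrix.add_apply, Matrix.smul_apply,
    Matrix.sub_apply, SimpleGraph.adjMatrix_apply, Matrix.diagonal_apply, smul_eq_mul]
  split_ifs with h1 h2
  · exact absurd (h2 ▸ h1) (G.irrefl)
  · ring
  · ring
  · ring

private lemma Bdiff (G : SimpleGraph (Fin n)) [DecidableRel G.Adj] {u v : Fin n}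
    (huv : G.Adj u v) [DecidableRel (G.deleteEdges {s(u,v)}).Adj] (α : ℝ) :
    Balpha G α - Balpha (G.deleteEdges {s(u,v)}) α =
      (1-α) • (Matrix.single u u (1:ℝ) + Matrix.single v v 1) +
      (2*α-1) • (Matrix.single u v (1:ℝ) + Matrix.single v u 1) := by
  have hne : u ≠ v := G.ne_of_adj huv
  ext i k
  have hstd : ∀ a b : Fin n, Matrix.single a b (1:ℝ) i k = if i = a ∧ k = b then 1 else 0 := by
    intro a b
    simp only [Matrix.single, Matrix.of_apply]
    exact if_congr ⟨fun h => ⟨h.1.symm, h.2.symm⟩, fun h => ⟨h.1.symm, h.2.symm⟩⟩ rfl rfl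
  rw [Matrix.sub_apply, Bentry, Bentry, deg_del G huv, adj_del_ite G huv]
  simp only [Matrix.add_apply, Matrix.smul_apply, smul_eq_mul, hstd]
  by_cases hiu : i = u <;> by_cases hiv : i = v <;> by_cases hku : k = u <;>
    by_cases hkv : k = v <;> simp_all [eq_comm, SimpleGraph.adj_comm, huv.symm] <;> ring

private lemma dot_std (u v : Fin n) (x : Fin n → ℝ) :
    x ⬝ᵥ ((Matrix.single u v (1:ℝ)) *ᵥ x) = x u * x v := by
  simp [dotProduct, mulVec, Matrix.single, ite_and, boole_mul, Finset.sum_ite_eq]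

private lemma inner_eq_dot (A : Matrix (Fin n) (Fin n) ℝ) (x : EuclideanSpace ℝ (Fin n)) :
    (inner ℝ x (Matrix.toEuclideanLin A x) : ℝ) =
      (WithLp.equiv 2 (Fin n → ℝ) x) ⬝ᵥ (A *ᵥ (WithLp.equiv 2 (Fin n → ℝ) x)) := by
  rw [EuclideanSpace.inner_eq_star_dotProduct, dotProduct_comm]
  rfl

end Aux

theorem stmt_5 {n : ℕ} (G : SimpleGraph (Fin n)) [DecidableRel G.Adj]
    (e : Sym2 (Fin n)) (he : e ∈ G.edgeSet)
    [DecidableRel (G.deleteEdges {e}).Adj]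
    (α : ℝ) (hα0 : 0 ≤ α) (hα : α ≤ 2/3)
    (hG : (Balpha G α).IsHermitian)
    (hG' : (Balpha (G.deleteEdges {e}) α).IsHermitian)
    (j : Fin n) :
    eigDesc hG' j ≤ eigDesc hG j := by
  rename_i instG instDel
  revert he instDel hG'
  induction e using Sym2.ind with
  | _ u v =>
    intro he instDel hG'
    rw [SimpleGraph.mem_edgeSet] at he
    apply eigDesc_mono hG hG'
    intro x
    set y : Fin n → ℝ := WithLp.equiv 2 (Fin n → ℝ) x with hy
    rw [inner_eq_dot, inner_eq_dot]
    show y ⬝ᵥ (Balpha (G.deleteEdges {s(u,v)}) α *ᵥ y) ≤ y ⬝ᵥ (Balpha G α *ᵥ y)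
    have hdiff := Bdiff G he α
    have h1 : Balpha G α =
        ((1-α) • (Matrix.single u u (1:ℝ) + Matrix.single v v 1) +
          (2*α-1) • (Matrix.single u v (1:ℝ) + Matrix.single v u 1)) +
          Balpha (G.deleteEdges {s(u,v)}) α := sub_eq_iff_eq_add.mp hdiff
    rw [h1, Matrix.add_mulVec, dotProduct_add]
    have h2 : 0 ≤ y ⬝ᵥ (((1-α) • (Matrix.single u u (1:ℝ) + Matrix.single v v 1) +
        (2*α-1) • (Matrix.single u v (1:ℝ) + Matrix.single v u 1)) *ᵥ y) := by
      rw [Matrix.add_mulVec, dotProduct_add, Matrix.smul_mulVec,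
        Matrix.smul_mulVec, dotProduct_smul, dotProduct_smul,
        Matrix.add_mulVec, Matrix.add_mulVec, dotProduct_add, dotProduct_add,
        dot_std, dot_std, dot_std, dot_std]
      simp only [smul_eq_mul]
      nlinarith [sq_nonneg (y u + y v), sq_nonneg (y u - y v)]
    linarith
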